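/- The map ι : {1,...,2^n} → {1,...,2^{n+1}} defined by ι(p) = p + 2^n is a homomorphism from the Laver table of order 2^n to the Laver table of order 2^{n+1}: ι(p ⋆ₙ q) = ι(p) ⋆_{n+1} ι(q). -/
import Mathlib


def LaverAxioms (N : ℕ) (star : ℕ → ℕ → ℕ) : Prop :=
  (∀ p q, p ∈ Set.Icc 1 N → q ∈ Set.Icc 1 N → star p q ∈ Set.Icc 1 N) ∧
  (∀ p ∈ Set.Icc 1 N, star p 1 = p % N + 1) ∧
  (∀ p q, p ∈ Set.Icc 1 N → q ∈ Set.Icc 1 N →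
    star p (star q 1) = star (star p q) (star p 1))

/-- The last row of a Laver table is the identity. -/
lemma laver_idrow {N : ℕ} {star : ℕ → ℕ → ℕ} (hL : LaverAxioms N star) (hN : 1 ≤ N) :
    ∀ q, 1 ≤ q → q ≤ N → star N q = q := by
  have hbase : star N 1 = 1 := by
    rw [hL.2.1 N ⟨hN, le_refl N⟩, Nat.mod_self]
  intro q hq1
  induction q, hq1 using Nat.le_induction with
  | base => intro _; exact hbase
  | succ q hq1 ihq =>
    intro hqN
    have hqlt : q < N := by omega
    have hq : q ∈ Set.Icc 1 N := Set.mem_Icc.mpr ⟨hq1, by omega⟩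
    have hs1 : star q 1 = q + 1 := by rw [hL.2.1 q hq, Nat.mod_eq_of_lt hqlt]
    have hd := hL.2.2 N q ⟨hN, le_refl N⟩ hq
    rw [hs1, hbase, ihq (by omega)] at hd
    rw [hd, hs1]

/-- Rows of a Laver table lie strictly above the diagonal. -/
lemma laver_growth {N : ℕ} {star : ℕ → ℕ → ℕ} (hL : LaverAxioms N star) :
    ∀ k p, N - p ≤ k → 1 ≤ p → p < N → ∀ q, 1 ≤ q → q ≤ N → p < star p q := by
  intro k
  induction k with
  | zero => intro p hk hp1 hpN; omega
  | succ k ih =>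
    intro p hk hp1 hpN
    have hpm : p ∈ Set.Icc 1 N := Set.mem_Icc.mpr ⟨hp1, hpN.le⟩
    have hsp1 : star p 1 = p + 1 := by rw [hL.2.1 p hpm, Nat.mod_eq_of_lt hpN]
    intro q hq1
    induction q, hq1 using Nat.le_induction with
    | base => intro _; rw [hsp1]; omega
    | succ q hq1 ihq =>
      intro hqN
      have hqlt : q < N := by omega
      have hqm : q ∈ Set.Icc 1 N := Set.mem_Icc.mpr ⟨hq1, hqlt.le⟩
      have hsq1 : star q 1 = q + 1 := by rw [hL.2.1 q hqm, Nat.mod_eq_of_lt hqlt]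
      have hdist := hL.2.2 p q hpm hqm
      rw [hsq1, hsp1] at hdist
      have hr := Set.mem_Icc.mp (hL.1 p q hpm hqm)
      have hrgt : p < star p q := ihq hqlt.le
      rw [hdist]
      rcases eq_or_lt_of_le hr.2 with he | hlt
      · rw [he, laver_idrow hL (by omega) (p + 1) (by omega) (by omega)]; omega
      · exact lt_trans hrgt
          (ih (star p q) (by omega) (by omega) hlt (p + 1) (by omega) (by omega))

/-- Key lemma: rows p + 2^n of the big table (for p < 2^n) are the shifted rows of
the small table, with period 2^n. Proven by downward induction on the row. -/
lemma laver_key (n : ℕ) (sS sB : ℕ → ℕ → ℕ)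
    (hS : LaverAxioms (2 ^ n) sS) (hB : LaverAxioms (2 ^ (n + 1)) sB) :
    ∀ k p, 2 ^ n - p ≤ k → 1 ≤ p → p < 2 ^ n →
      (∀ q, 1 ≤ q → q ≤ 2 ^ n → sB (p + 2 ^ n) q = sS p q + 2 ^ n) ∧
      (∀ q, 1 ≤ q → q ≤ 2 ^ n → sB (p + 2 ^ n) (q + 2 ^ n) = sS p q + 2 ^ n) := by
  have hNN : (2 : ℕ) ^ (n + 1) = 2 ^ n + 2 ^ n := by ring
  have hh1 : (1 : ℕ) ≤ 2 ^ n := Nat.one_le_two_pow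
  intro k
  induction k with
  | zero => intro p hk hp1 hph; omega
  | succ k ih =>
    intro p hk hp1 hph
    have hpmS : p ∈ Set.Icc 1 (2 ^ n) := Set.mem_Icc.mpr ⟨hp1, hph.le⟩
    have hsp1 : sS p 1 = p + 1 := by rw [hS.2.1 p hpmS, Nat.mod_eq_of_lt hph]
    have hpB : p + 2 ^ n ∈ Set.Icc 1 (2 ^ (n + 1)) := Set.mem_Icc.mpr ⟨by omega, by omega⟩
    have hBp1 : sB (p + 2 ^ n) 1 = p + 2 ^ n + 1 := by
      rw [hB.2.1 _ hpB, Nat.mod_eq_of_lt (by omega)]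
    have step : ∀ r, 1 ≤ r → r ≤ 2 ^ n → p < r →
        sB (r + 2 ^ n) (p + 2 ^ n + 1) = sS r (p + 1) + 2 ^ n := by
      intro r hr1 hrh hpr
      rcases eq_or_lt_of_le hrh with he | hlt
      · rw [he, ← hNN, laver_idrow hB (by omega) (p + 2 ^ n + 1) (by omega) (by omega),
          laver_idrow hS (by omega) (p + 1) (by omega) (by omega)]
        omega
      · have h2 := (ih r (by omega) hr1 hlt).2 (p + 1) (by omega) (by omega)
        have e : p + 1 + 2 ^ n = p + 2 ^ n + 1 := by ring
        rw [e] at h2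
        exact h2
    have part1 : ∀ q, 1 ≤ q → q ≤ 2 ^ n → sB (p + 2 ^ n) q = sS p q + 2 ^ n := by
      intro q hq1
      induction q, hq1 using Nat.le_induction with
      | base =>
        intro _
        rw [hB.2.1 _ hpB, Nat.mod_eq_of_lt (by omega), hsp1]
        omega
      | succ q hq1 ihq =>
        intro hqh
        have hqlt : q < 2 ^ n := by omega
        have hqmS : q ∈ Set.Icc 1 (2 ^ n) := Set.mem_Icc.mpr ⟨hq1, hqlt.le⟩
        have hqmB : q ∈ Set.Icc 1 (2 ^ (n + 1)) := Set.mem_Icc.mpr ⟨hq1, by omega⟩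
        have hBq1 : sB q 1 = q + 1 := by rw [hB.2.1 q hqmB, Nat.mod_eq_of_lt (by omega)]
        have hdB := hB.2.2 (p + 2 ^ n) q hpB hqmB
        rw [hBq1, hBp1, ihq hqlt.le] at hdB
        have hSq1 : sS q 1 = q + 1 := by rw [hS.2.1 q hqmS, Nat.mod_eq_of_lt hqlt]
        have hdS := hS.2.2 p q hpmS hqmS
        rw [hSq1, hsp1] at hdS
        have hr := Set.mem_Icc.mp (hS.1 p q hpmS hqmS)
        have hrgt := laver_growth hS (2 ^ n) p (by omega) hp1 hph q hq1 hqlt.le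
        rw [hdB, hdS]
        exact step (sS p q) hr.1 hr.2 hrgt
    have part2 : ∀ q, 1 ≤ q → q ≤ 2 ^ n → sB (p + 2 ^ n) (q + 2 ^ n) = sS p q + 2 ^ n := by
      intro q hq1
      induction q, hq1 using Nat.le_induction with
      | base =>
        intro _
        have hhB : (2 : ℕ) ^ n ∈ Set.Icc 1 (2 ^ (n + 1)) := Set.mem_Icc.mpr ⟨hh1, by omega⟩
        have hBh1 : sB (2 ^ n) 1 = 2 ^ n + 1 := by
          rw [hB.2.1 _ hhB, Nat.mod_eq_of_lt (by omega)]
        have hdB := hB.2.2 (p + 2 ^ n) (2 ^ n) hpB hhB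
        rw [hBh1, hBp1, part1 (2 ^ n) hh1 le_rfl] at hdB
        have hSh1 : sS (2 ^ n) 1 = 1 := by
          rw [hS.2.1 _ (Set.mem_Icc.mpr ⟨hh1, le_rfl⟩), Nat.mod_self]
        have hdS := hS.2.2 p (2 ^ n) hpmS (Set.mem_Icc.mpr ⟨hh1, le_rfl⟩)
        rw [hSh1, hsp1] at hdS
        have hr := Set.mem_Icc.mp (hS.1 p (2 ^ n) hpmS (Set.mem_Icc.mpr ⟨hh1, le_rfl⟩))
        have hrgt := laver_growth hS (2 ^ n) p (by omega) hp1 hph (2 ^ n) hh1 le_rfl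
        have e1 : 1 + 2 ^ n = 2 ^ n + 1 := by ring
        rw [e1, hdB, hsp1, hdS]
        exact step _ hr.1 hr.2 hrgt
      | succ q hq1 ihq =>
        intro hqh
        have hqlt : q < 2 ^ n := by omega
        have hqmS : q ∈ Set.Icc 1 (2 ^ n) := Set.mem_Icc.mpr ⟨hq1, hqlt.le⟩
        have hqB : q + 2 ^ n ∈ Set.Icc 1 (2 ^ (n + 1)) := Set.mem_Icc.mpr ⟨by omega, by omega⟩
        have hBqh1 : sB (q + 2 ^ n) 1 = q + 2 ^ n + 1 := by
          rw [hB.2.1 _ hqB, Nat.mod_eq_of_lt (by omega)]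
        have hdB := hB.2.2 (p + 2 ^ n) (q + 2 ^ n) hpB hqB
        rw [hBqh1, hBp1, ihq hqlt.le] at hdB
        have hSq1 : sS q 1 = q + 1 := by rw [hS.2.1 q hqmS, Nat.mod_eq_of_lt hqlt]
        have hdS := hS.2.2 p q hpmS hqmS
        rw [hSq1, hsp1] at hdS
        have hr := Set.mem_Icc.mp (hS.1 p q hpmS hqmS)
        have hrgt := laver_growth hS (2 ^ n) p (by omega) hp1 hph q hq1 hqlt.le
        have e1 : q + 1 + 2 ^ n = q + 2 ^ n + 1 := by ring
        rw [e1, hdB, hdS]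
        exact step _ hr.1 hr.2 hrgt
    exact ⟨part1, part2⟩

/-- the map ι(p) = p + 2^n is a homomorphism from the Laver table of
order 2^n to the Laver table of order 2^{n+1}: ι(p ⋆ₙ q) = ι(p) ⋆_{n+1} ι(q). -/
theorem laver_shift_hom (n : ℕ) (starSmall starBig : ℕ → ℕ → ℕ)
    (hS : LaverAxioms (2 ^ n) starSmall) (hB : LaverAxioms (2 ^ (n + 1)) starBig) :
    ∀ p ∈ Set.Icc 1 (2 ^ n), ∀ q ∈ Set.Icc 1 (2 ^ n),
      starSmall p q + 2 ^ n = starBig (p + 2 ^ n) (q + 2 ^ n) := by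
  intro p hp q hq
  rw [Set.mem_Icc] at hp hq
  have hh1 : (1 : ℕ) ≤ 2 ^ n := Nat.one_le_two_pow
  have hNN : (2 : ℕ) ^ (n + 1) = 2 ^ n + 2 ^ n := by ring
  rcases eq_or_lt_of_le hp.2 with he | hlt
  · rw [he, laver_idrow hS hh1 q hq.1 hq.2, ← hNN,
      laver_idrow hB (by omega) (q + 2 ^ n) (by omega) (by omega)]
  · exact ((laver_key n starSmall starBig hS hB (2 ^ n) p (by omega) hp.1 hlt).2
      q hq.1 hq.2).symm
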